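/- If G is a bicyclic graph on n vertices and v is any vertex of G, then the number of connected sets of G containing v is at least n + 3. -/

import Mathlib

open SimpleGraph

/-- Number of connected sets (nonempty vertex subsets inducing a connected subgraph). -/
noncomputable def numConnSets {V : Type*} [Fintype V] (G : SimpleGraph V) : ℕ :=
  Nat.card {s : Finset V // (G.induce (↑s : Set V)).Connected}

/-- Number of connected sets containing the vertex `v`. -/
noncomputable def numConnSetsAt {V : Type*} [Fintype V] (G : SimpleGraph V) (v : V) : ℕ :=
  Nat.card {s : Finset V // v ∈ s ∧ (G.induce (↑s : Set V)).Connected}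

/-- A graph is bicyclic if it is connected and has one more edge than vertices. -/
def Bicyclic {V : Type*} [Fintype V] (G : SimpleGraph V) : Prop :=
  G.Connected ∧ Nat.card G.edgeSet = Fintype.card V + 1

/-- The tadpole graph `D_m`: a triangle on vertices `0,1,2` with the path
`2,3,…,m-1` attached. -/
def tadpoleGraph (m : ℕ) : SimpleGraph (Fin m) :=
  SimpleGraph.fromRel (fun i j =>
    ((i : ℕ) = 0 ∧ (j : ℕ) = 1) ∨ ((i : ℕ) = 0 ∧ (j : ℕ) = 2) ∨
    ((i : ℕ) = 1 ∧ (j : ℕ) = 2) ∨ (2 ≤ (i : ℕ) ∧ (j : ℕ) = (i : ℕ) + 1))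

/-- The graph `L_n = G[3,3,n-4]`: triangles on `{0,1,2}` and `{n-3,n-2,n-1}`
joined by the path `2,3,…,n-3`. -/
def Lgraph (n : ℕ) : SimpleGraph (Fin n) :=
  SimpleGraph.fromRel (fun i j =>
    ((i : ℕ) = 0 ∧ (j : ℕ) = 1) ∨ ((i : ℕ) = 0 ∧ (j : ℕ) = 2) ∨
    ((i : ℕ) = 1 ∧ (j : ℕ) = 2) ∨
    (2 ≤ (i : ℕ) ∧ (j : ℕ) = (i : ℕ) + 1 ∧ (j : ℕ) ≤ n - 3) ∨
    ((i : ℕ) = n - 3 ∧ (j : ℕ) = n - 2) ∨ ((i : ℕ) = n - 3 ∧ (j : ℕ) = n - 1) ∨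
    ((i : ℕ) = n - 2 ∧ (j : ℕ) = n - 1))

/-- The graph `A_n`: `K₄` minus an edge on `{0,1,2,3}` (missing edge `0-3`,
so `3` has degree `2`) with the path `3,4,…,n-1` attached at `3`. -/
def Agraph (n : ℕ) : SimpleGraph (Fin n) :=
  SimpleGraph.fromRel (fun i j =>
    ((i : ℕ) = 0 ∧ (j : ℕ) = 1) ∨ ((i : ℕ) = 0 ∧ (j : ℕ) = 2) ∨
    ((i : ℕ) = 1 ∧ (j : ℕ) = 2) ∨ ((i : ℕ) = 1 ∧ (j : ℕ) = 3) ∨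
    ((i : ℕ) = 2 ∧ (j : ℕ) = 3) ∨ (3 ≤ (i : ℕ) ∧ (j : ℕ) = (i : ℕ) + 1))

/-- The graph `R_n`: vertex `0 = w` adjacent to all other vertices, with extra
edges `1-2` and `3-4` forming two triangles through `w`; the remaining `n-5`
neighbours of `w` are leaves. -/
def Rgraph (n : ℕ) : SimpleGraph (Fin n) :=
  SimpleGraph.fromRel (fun i j =>
    ((i : ℕ) = 0 ∧ (j : ℕ) ≠ 0) ∨ ((i : ℕ) = 1 ∧ (j : ℕ) = 2) ∨
    ((i : ℕ) = 3 ∧ (j : ℕ) = 4))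

/-- The graph `B_n`: `K₄` minus an edge on `{0,1,2,3}` (missing edge `0-3`,
so `1` has degree `3`) with `n-4` pendant edges `1-4, 1-5, …, 1-(n-1)`
attached at the degree-3 vertex `1`. -/
def Bgraph (n : ℕ) : SimpleGraph (Fin n) :=
  SimpleGraph.fromRel (fun i j =>
    ((i : ℕ) = 0 ∧ (j : ℕ) = 1) ∨ ((i : ℕ) = 0 ∧ (j : ℕ) = 2) ∨
    ((i : ℕ) = 1 ∧ (j : ℕ) = 2) ∨ ((i : ℕ) = 1 ∧ (j : ℕ) = 3) ∨
    ((i : ℕ) = 2 ∧ (j : ℕ) = 3) ∨ ((i : ℕ) = 1 ∧ 4 ≤ (j : ℕ)))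
namespace BicyclicAux

open Finset SimpleGraph

variable {V : Type*} (G : SimpleGraph V) (v : V)

lemma induce_singleton_conn (x : V) : (G.induce ({x} : Set V)).Connected := by
  rw [connected_iff]
  refine ⟨?_, ⟨⟨x, rfl⟩⟩⟩
  rintro ⟨a, ha⟩ ⟨b, hb⟩
  simp only [Set.mem_singleton_iff] at ha hb
  subst ha; subst hb
  exact Reachable.refl _

lemma induce_insert_conn [DecidableEq V] {s : Finset V}
    (hs : (G.induce (↑s : Set V)).Connected)
    {x w : V} (ha : G.Adj x w) (hw : w ∈ s) :
    (G.induce (↑(insert x s) : Set V)).Connected := by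
  have hset : (↑(insert x s) : Set V) = ({x, w} : Set V) ∪ ↑s := by
    ext y
    simp only [Finset.coe_insert, Set.mem_insert_iff, Finset.mem_coe, Set.mem_union,
      Set.mem_singleton_iff]
    constructor
    · rintro (rfl | h)
      · exact Or.inl (Or.inl rfl)
      · exact Or.inr h
    · rintro ((rfl | rfl) | h)
      · exact Or.inl rfl
      · exact Or.inr hw
      · exact Or.inr h
  rw [hset]
  exact induce_union_connected (induce_pair_connected_of_adj ha).preconnected hs.preconnected
    ⟨w, by simp, by simpa using hw⟩

lemma induce_union_conn [DecidableEq V] {s t : Finset V}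
    (hs : (G.induce (↑s : Set V)).Connected) (ht : (G.induce (↑t : Set V)).Connected)
    {x : V} (hxs : x ∈ s) (hxt : x ∈ t) :
    (G.induce (↑(s ∪ t) : Set V)).Connected := by
  rw [Finset.coe_union]
  exact induce_union_connected hs.preconnected ht.preconnected ⟨x, by simpa using hxs, by simpa using hxt⟩

open Classical in
/-- Choice of a BFS parent: a neighbour strictly closer to `v`. -/
noncomputable def gpar (u : V) : V :=
  if h : ∃ w, G.Adj w u ∧ G.dist v w + 1 = G.dist v u then h.choose else v

lemma gpar_spec (hc : G.Connected) {u : V} (hu : u ≠ v) :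
    G.Adj (gpar G v u) u ∧ G.dist v (gpar G v u) + 1 = G.dist v u := by
  have hex : ∃ w, G.Adj w u ∧ G.dist v w + 1 = G.dist v u := by
    obtain ⟨p, hp⟩ := (hc v u).exists_walk_length_eq_dist
    obtain ⟨w, ha, q, hq⟩ := Walk.exists_eq_cons_of_ne hu p.reverse
    have hlen : q.length + 1 = G.dist v u := by
      have h := congrArg Walk.length hq
      rw [Walk.length_reverse, Walk.length_cons] at h
      omega
    have h1 : G.dist v w ≤ q.length := by
      have := G.dist_le q.reverse
      simpa [Walk.length_reverse] using this
    have h2 : G.dist v u ≤ G.dist v w + 1 := by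
      obtain ⟨r, hr⟩ := (hc v w).exists_walk_length_eq_dist
      have := G.dist_le (r.concat ha.symm)
      rwa [Walk.length_concat, hr] at this
    exact ⟨w, ha.symm, by omega⟩
  unfold gpar
  rw [dif_pos hex]
  exact hex.choose_spec

/-- Auxiliary construction of the geodesic set. -/
noncomputable def geo [DecidableEq V] : ℕ → V → Finset V
  | 0, _ => {v}
  | (k+1), u => if u = v then {v} else insert u (geo k (gpar G v u))

/-- The chosen geodesic from `v` to `u`, as a vertex set. -/
noncomputable def Pg [DecidableEq V] (u : V) : Finset V := geo G v (G.dist v u) u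

lemma Pg_v [DecidableEq V] : Pg G v v = {v} := by
  rw [Pg, SimpleGraph.dist_self]
  rfl

lemma Pg_ne [DecidableEq V] (hc : G.Connected) {u : V} (hu : u ≠ v) :
    Pg G v u = insert u (Pg G v (gpar G v u)) := by
  have h2 := (gpar_spec G v hc hu).2
  rw [Pg, ← h2]
  show geo G v (G.dist v (gpar G v u) + 1) u = _
  rw [geo, if_neg hu, Pg]

lemma Pg_spec [DecidableEq V] (hc : G.Connected) (u : V) :
    v ∈ Pg G v u ∧ u ∈ Pg G v u ∧
    (∀ w ∈ Pg G v u, G.dist v w ≤ G.dist v u) ∧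
    (∀ w₁ ∈ Pg G v u, ∀ w₂ ∈ Pg G v u, G.dist v w₁ = G.dist v w₂ → w₁ = w₂) ∧
    (G.induce (↑(Pg G v u) : Set V)).Connected := by
  suffices H : ∀ k, ∀ u, G.dist v u ≤ k →
      (v ∈ Pg G v u ∧ u ∈ Pg G v u ∧
      (∀ w ∈ Pg G v u, G.dist v w ≤ G.dist v u) ∧
      (∀ w₁ ∈ Pg G v u, ∀ w₂ ∈ Pg G v u, G.dist v w₁ = G.dist v w₂ → w₁ = w₂) ∧
      (G.induce (↑(Pg G v u) : Set V)).Connected) from H _ u le_rfl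
  intro k
  induction k with
  | zero =>
    intro u hu
    have huv : u = v := by
      have := (hc.dist_eq_zero_iff (u := v) (v := u)).mp (Nat.le_zero.mp hu)
      exact this.symm
    subst huv
    rw [Pg_v]
    refine ⟨mem_singleton_self _, mem_singleton_self _, ?_, ?_, ?_⟩
    · intro w hw; rw [mem_singleton] at hw; subst hw; exact le_rfl
    · intro w₁ h₁ w₂ h₂ _
      rw [mem_singleton] at h₁ h₂; rw [h₁, h₂]
    · rw [Finset.coe_singleton]; exact induce_singleton_conn G u
  | succ k IH =>
    intro u hu
    by_cases h : u = v
    · subst h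
      rw [Pg_v]
      refine ⟨mem_singleton_self _, mem_singleton_self _, ?_, ?_, ?_⟩
      · intro w hw; rw [mem_singleton] at hw; subst hw; exact le_rfl
      · intro w₁ h₁ w₂ h₂ _
        rw [mem_singleton] at h₁ h₂; rw [h₁, h₂]
      · rw [Finset.coe_singleton]; exact induce_singleton_conn G u
    · obtain ⟨hadj, hd⟩ := gpar_spec G v hc h
      have hdp : G.dist v (gpar G v u) ≤ k := by omega
      obtain ⟨ih1, ih2, ih3, ih4, ih5⟩ := IH (gpar G v u) hdp
      rw [Pg_ne G v hc h]
      refine ⟨mem_insert_of_mem ih1, mem_insert_self _ _, ?_, ?_, ?_⟩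
      · intro w hw
        rcases mem_insert.mp hw with rfl | hw'
        · exact le_rfl
        · have := ih3 w hw'; omega
      · intro w₁ h₁ w₂ h₂ he
        rcases mem_insert.mp h₁ with rfl | h₁' <;> rcases mem_insert.mp h₂ with rfl | h₂'
        · rfl
        · have := ih3 w₂ h₂'; omega
        · have := ih3 w₁ h₁'; omega
        · exact ih4 w₁ h₁' w₂ h₂' he
      · exact induce_insert_conn G ih5 hadj.symm ih2

end BicyclicAux


namespace BicyclicAux

open Finset SimpleGraph

variable {V : Type*} (G : SimpleGraph V) (v : V)

lemma structure_aux [Fintype V] [DecidableEq V] [DecidableRel G.Adj]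
    (hc : G.Connected) (hm : Nat.card G.edgeSet = Fintype.card V + 1) :
    (∃ x w, G.Adj x w ∧ G.dist v w + 1 = G.dist v x ∧ w ≠ gpar G v x) ∨
    (∃ a b c d : V, G.Adj a b ∧ G.Adj c d ∧ G.dist v a = G.dist v b ∧
      G.dist v c = G.dist v d ∧ ¬(c = a ∧ d = b) ∧ ¬(c = b ∧ d = a)) := by
  have hn1 : 1 ≤ Fintype.card V := Fintype.card_pos_iff.mpr ⟨v⟩
  have step : ∀ a b : V, G.Adj a b → G.dist v b ≤ G.dist v a + 1 := by
    intro a b h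
    obtain ⟨r, hr⟩ := (hc v a).exists_walk_length_eq_dist
    have h2 := G.dist_le (r.concat h)
    rwa [Walk.length_concat, hr] at h2
  set A := Finset.univ.filter (fun p : V × V => G.Adj p.1 p.2) with hA
  have hAmem : ∀ p : V × V, p ∈ A ↔ G.Adj p.1 p.2 := by
    intro p; rw [hA, Finset.mem_filter]; simp
  have hmE : (2 : ℕ) * (Fintype.card V + 1) =
      (Finset.univ.filter fun (x, y) => G.Adj x y).card := by
    rw [← SimpleGraph.two_mul_card_edgeFinset, SimpleGraph.edgeFinset_card, ← hm,
      Nat.card_eq_fintype_card]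
  have hAcard : A.card = 2 * (Fintype.card V + 1) := by
    rw [hA, hmE]
  set down := A.filter (fun p => G.dist v p.2 + 1 = G.dist v p.1) with hdown
  set up := A.filter (fun p => G.dist v p.1 + 1 = G.dist v p.2) with hup
  set horiz := A.filter (fun p => G.dist v p.1 = G.dist v p.2) with hhoriz
  have hcup : down ∪ up ∪ horiz = A := by
    ext p
    simp only [hdown, hup, hhoriz, Finset.mem_union, Finset.mem_filter]
    constructor
    · rintro ((h | h) | h) <;> exact h.1
    · intro hp
      have hadj := (hAmem p).mp hp
      have s1 := step p.1 p.2 hadj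
      have s2 := step p.2 p.1 hadj.symm
      rcases Nat.lt_trichotomy (G.dist v p.1) (G.dist v p.2) with h | h | h
      · exact Or.inl (Or.inr ⟨hp, by omega⟩)
      · exact Or.inr ⟨hp, h⟩
      · exact Or.inl (Or.inl ⟨hp, by omega⟩)
  have hdisj1 : Disjoint down up := by
    rw [Finset.disjoint_left]
    intro p hp hq
    simp only [hdown, hup, Finset.mem_filter] at hp hq
    omega
  have hdisj2 : Disjoint (down ∪ up) horiz := by
    rw [Finset.disjoint_left]
    intro p hp hq
    simp only [Finset.mem_union, hdown, hup, hhoriz, Finset.mem_filter] at hp hq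
    rcases hp with h | h <;> omega
  have hsplit : A.card = down.card + up.card + horiz.card := by
    rw [← hcup, Finset.card_union_of_disjoint hdisj2, Finset.card_union_of_disjoint hdisj1]
  have hud : up.card = down.card := by
    rw [hup, hdown]
    apply Finset.card_nbij' (i := Prod.swap) (j := Prod.swap)
    · intro p hp
      rw [Finset.mem_coe, Finset.mem_filter] at hp ⊢
      exact ⟨(hAmem p.swap).mpr ((hAmem p).mp hp.1).symm, hp.2⟩
    · intro p hp
      rw [Finset.mem_coe, Finset.mem_filter] at hp ⊢
      exact ⟨(hAmem p.swap).mpr ((hAmem p).mp hp.1).symm, hp.2⟩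
    · intro p _; exact Prod.swap_swap p
    · intro p _; exact Prod.swap_swap p
  have hparents : (down.filter (fun p => p.2 = gpar G v p.1)).card = Fintype.card V - 1 := by
    have hbij : (down.filter (fun p => p.2 = gpar G v p.1)).card =
        (Finset.univ.erase v).card := by
      apply Finset.card_nbij' (i := fun p => p.1) (j := fun u => (u, gpar G v u))
      · intro p hp
        rw [Finset.mem_coe, Finset.mem_filter, hdown, Finset.mem_filter] at hp
        rw [Finset.mem_coe, Finset.mem_erase]
        refine ⟨?_, Finset.mem_univ _⟩
        intro (h : p.1 = v)
        have hd := hp.1.2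
        rw [h, SimpleGraph.dist_self] at hd
        omega
      · intro u hu
        rw [Finset.mem_coe, Finset.mem_erase] at hu
        obtain ⟨hadj, hd⟩ := gpar_spec G v hc hu.1
        rw [Finset.mem_coe, Finset.mem_filter, hdown, Finset.mem_filter]
        exact ⟨⟨(hAmem _).mpr hadj.symm, hd⟩, rfl⟩
      · intro p hp
        rw [Finset.mem_coe, Finset.mem_filter] at hp
        have h2 := hp.2
        exact Prod.ext_iff.mpr ⟨rfl, h2.symm⟩
      · intro u _; rfl
    rw [hbij, Finset.card_erase_of_mem (Finset.mem_univ v), Finset.card_univ]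
  have hsplit2 : (down.filter (fun p => p.2 = gpar G v p.1)).card +
      (down.filter (fun p => ¬ p.2 = gpar G v p.1)).card = down.card :=
    Finset.card_filter_add_card_filter_not _
  by_cases hX : (down.filter (fun p => ¬ p.2 = gpar G v p.1)).Nonempty
  · left
    obtain ⟨p, hp⟩ := hX
    rw [Finset.mem_filter, hdown, Finset.mem_filter] at hp
    exact ⟨p.1, p.2, (hAmem p).mp hp.1.1, hp.1.2, hp.2⟩
  · right
    have h0 : (down.filter (fun p => ¬ p.2 = gpar G v p.1)).card = 0 := by
      rw [Finset.card_eq_zero]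
      exact Finset.not_nonempty_iff_eq_empty.mp hX
    have hhc : horiz.card = 4 := by omega
    have h1 : horiz.Nonempty := by
      rw [← Finset.card_pos, hhc]; omega
    obtain ⟨⟨a, b⟩, hab⟩ := h1
    have habA : G.Adj a b ∧ G.dist v a = G.dist v b := by
      rw [hhoriz, Finset.mem_filter] at hab
      exact ⟨(hAmem _).mp hab.1, hab.2⟩
    have hsub : ¬ (horiz ⊆ ({(a, b), (b, a)} : Finset (V × V))) := by
      intro hsub
      have hle := Finset.card_le_card hsub
      have h2 : ({(a, b), (b, a)} : Finset (V × V)).card ≤ 2 := by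
        apply le_trans (Finset.card_insert_le _ _)
        simp
      omega
    obtain ⟨⟨c, d⟩, hcd, hcdne⟩ := Finset.not_subset.mp hsub
    have hcdA : G.Adj c d ∧ G.dist v c = G.dist v d := by
      rw [hhoriz, Finset.mem_filter] at hcd
      exact ⟨(hAmem _).mp hcd.1, hcd.2⟩
    simp only [Finset.mem_insert, Finset.mem_singleton, Prod.mk.injEq, not_or] at hcdne
    exact ⟨a, b, c, d, habA.1, hcdA.1, habA.2, hcdA.2,
      fun h => hcdne.1 ⟨h.1, h.2⟩, fun h => hcdne.2 ⟨h.1, h.2⟩⟩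

end BicyclicAux


open Finset in
/-- In a bicyclic graph on `n` vertices, every vertex lies in at least `n + 3`
connected sets. -/
theorem numConnSetsAt_ge_of_bicyclic
    {V : Type*} [Fintype V] (n : ℕ) (hn : Fintype.card V = n)
    (G : SimpleGraph V) (hG : Bicyclic G) (v : V) :
    n + 3 ≤ numConnSetsAt G v := by
  classical
  obtain ⟨hc, hm⟩ := hG
  subst hn
  set P : V → Finset V := BicyclicAux.Pg G v with hP
  have spec : ∀ u, v ∈ P u ∧ u ∈ P u ∧
      (∀ w ∈ P u, G.dist v w ≤ G.dist v u) ∧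
      (∀ w₁ ∈ P u, ∀ w₂ ∈ P u, G.dist v w₁ = G.dist v w₂ → w₁ = w₂) ∧
      (G.induce (↑(P u) : Set V)).Connected := by
    rw [hP]; exact fun u => BicyclicAux.Pg_spec G v hc u
  have Pv : ∀ u, v ∈ P u := fun u => (spec u).1
  have Pself : ∀ u, u ∈ P u := fun u => (spec u).2.1
  have Plev : ∀ u, ∀ w, w ∈ P u → G.dist v w ≤ G.dist v u :=
    fun u w hw => (spec u).2.2.1 w hw
  have Pinj : ∀ u w₁, w₁ ∈ P u → ∀ w₂, w₂ ∈ P u → G.dist v w₁ = G.dist v w₂ → w₁ = w₂ :=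
    fun u w₁ h₁ w₂ h₂ he => (spec u).2.2.2.1 w₁ h₁ w₂ h₂ he
  have Pconn : ∀ u, (G.induce (↑(P u) : Set V)).Connected := fun u => (spec u).2.2.2.2
  have Pex : ∀ u, u ≠ v → P u = insert u (P (BicyclicAux.gpar G v u)) := by
    rw [hP]; exact fun u hu => BicyclicAux.Pg_ne G v hc hu
  have notMemHigh : ∀ x u, G.dist v u < G.dist v x → x ∉ P u := by
    intro x u h hx
    exact absurd (Plev u x hx) (by omega)
  have topEq : ∀ x u, x ∈ P u → G.dist v x = G.dist v u → x = u := by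
    intro x u hx hd
    exact Pinj u x hx u (Pself u) (by rw [hd])
  have PInj : Function.Injective P := by
    intro a b hab
    have ha : a ∈ P b := by rw [← hab]; exact Pself a
    have hb : b ∈ P a := by rw [hab]; exact Pself b
    exact Pinj b a ha b (Pself b) (le_antisymm (Plev b a ha) (Plev a b hb))
  have notImage : ∀ (s : Finset V) (p q : V), p ∈ s → q ∈ s → p ≠ q →
      G.dist v p = G.dist v q → s ∉ Finset.univ.image P := by
    intro s p q hp hq hne hd hmem
    obtain ⟨u, -, rfl⟩ := Finset.mem_image.mp hmem
    exact hne (Pinj u p hp q hq hd)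
  -- the final counting step
  have finish : ∀ e₁ e₂ e₃ : Finset V,
      (v ∈ e₁ ∧ (G.induce (↑e₁ : Set V)).Connected) →
      (v ∈ e₂ ∧ (G.induce (↑e₂ : Set V)).Connected) →
      (v ∈ e₃ ∧ (G.induce (↑e₃ : Set V)).Connected) →
      e₁ ≠ e₂ → e₁ ≠ e₃ → e₂ ≠ e₃ →
      e₁ ∉ Finset.univ.image P → e₂ ∉ Finset.univ.image P → e₃ ∉ Finset.univ.image P →
      Fintype.card V + 3 ≤ numConnSetsAt G v := by
    intro e₁ e₂ e₃ h₁ h₂ h₃ h12 h13 h23 hi1 hi2 hi3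
    set fam : Finset (Finset V) :=
      insert e₁ (insert e₂ (insert e₃ (Finset.univ.image P))) with hfam
    have hcard : fam.card = Fintype.card V + 3 := by
      rw [hfam]
      rw [Finset.card_insert_of_notMem (by simp [h12, h13, hi1]),
          Finset.card_insert_of_notMem (by simp [h23, hi2]),
          Finset.card_insert_of_notMem hi3,
          Finset.card_image_of_injective _ PInj, Finset.card_univ]
    have hOKfam : ∀ s ∈ fam, v ∈ s ∧ (G.induce (↑s : Set V)).Connected := by
      intro s hs
      rw [hfam] at hs
      simp only [Finset.mem_insert, Finset.mem_image] at hs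
      rcases hs with rfl | rfl | rfl | ⟨u, -, rfl⟩
      exacts [h₁, h₂, h₃, ⟨Pv u, Pconn u⟩]
    have hdef : numConnSetsAt G v =
        Nat.card {s : Finset V // v ∈ s ∧ (G.induce (↑s : Set V)).Connected} := rfl
    rw [hdef, Nat.card_eq_fintype_card, Fintype.card_subtype]
    have hsubset : fam ⊆ Finset.univ.filter
        (fun s : Finset V => v ∈ s ∧ (G.induce (↑s : Set V)).Connected) := by
      intro s hs
      exact Finset.mem_filter.mpr ⟨Finset.mem_univ _, hOKfam s hs⟩
    have hle := Finset.card_le_card hsubset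
    omega
  rcases BicyclicAux.structure_aux G v hc hm with ⟨x, w, hadj, hdw, hnp⟩ |
    ⟨a, b, c, d, hab, hcd, hDab, hDcd, hne1, hne2⟩
  · -- Case A : a non-parent cross edge exists
    have hxv : x ≠ v := by
      intro h; subst h
      rw [SimpleGraph.dist_self] at hdw
      omega
    obtain ⟨hgadj, hgd⟩ := BicyclicAux.gpar_spec G v hc hxv
    set g := BicyclicAux.gpar G v x with hg
    have hDgw : G.dist v g = G.dist v w := by omega
    have hgPw : g ∉ P w := by
      intro h
      exact hnp (topEq g w h hDgw).symm
    have hxPw : x ∉ P w := notMemHigh x w (by omega)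
    have hxPg : x ∉ P g := notMemHigh x g (by omega)
    have hxe₂ : x ∉ P w ∪ P g := by
      rw [Finset.mem_union]; tauto
    have hge₁ : g ∉ insert x (P w) := by
      intro h
      rcases Finset.mem_insert.mp h with h' | h'
      · rw [h'] at hDgw; omega
      · exact hgPw h'
    have hge₂ : g ∈ P w ∪ P g := Finset.mem_union_right _ (Pself g)
    refine finish (insert x (P w)) (P w ∪ P g) (insert x (P w ∪ P g)) ⟨?_, ?_⟩ ⟨?_, ?_⟩ ⟨?_, ?_⟩
      ?_ ?_ ?_ ?_ ?_ ?_
    · exact Finset.mem_insert_of_mem (Pv w)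
    · exact BicyclicAux.induce_insert_conn G (Pconn w) hadj (Pself w)
    · exact Finset.mem_union_left _ (Pv w)
    · exact BicyclicAux.induce_union_conn G (Pconn w) (Pconn g) (Pv w) (Pv g)
    · exact Finset.mem_insert_of_mem (Finset.mem_union_left _ (Pv w))
    · exact BicyclicAux.induce_insert_conn G
        (BicyclicAux.induce_union_conn G (Pconn w) (Pconn g) (Pv w) (Pv g)) hadj
        (Finset.mem_union_left _ (Pself w))
    · intro h; rw [← h] at hge₂; exact hge₁ hge₂
    · intro h
      have : g ∈ insert x (P w ∪ P g) := Finset.mem_insert_of_mem hge₂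
      rw [← h] at this
      exact hge₁ this
    · intro h
      have : x ∈ insert x (P w ∪ P g) := Finset.mem_insert_self _ _
      rw [← h] at this
      exact hxe₂ this
    · -- insert x (P w) is not a geodesic set
      intro hmem
      obtain ⟨u, -, hu⟩ := Finset.mem_image.mp hmem
      have hxPu : x ∈ P u := by rw [hu]; exact Finset.mem_insert_self _ _
      have huu : u ∈ insert x (P w) := by rw [← hu]; exact Pself u
      rcases Finset.mem_insert.mp huu with h' | hupw
      · have hPx : P x = insert x (P g) := by rw [hg]; exact Pex x hxv
        have hgin : g ∈ P x := by
          rw [hPx]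
          exact Finset.mem_insert_of_mem (Pself g)
        rw [← h', hu] at hgin
        exact hge₁ hgin
      · have h1 := Plev w u hupw
        have h2 := Plev u x hxPu
        omega
    · exact notImage _ w g (Finset.mem_union_left _ (Pself w)) hge₂
        hnp hDgw.symm
    · exact notImage _ w g (Finset.mem_insert_of_mem (Finset.mem_union_left _ (Pself w)))
        (Finset.mem_insert_of_mem hge₂) hnp hDgw.symm
  · -- Case B : two distinct horizontal edges
    have haneb : a ≠ b := hab.ne
    have hcned : c ≠ d := hcd.ne
    by_cases hB1 : G.dist v c = G.dist v a
    · -- same level : three distinct vertices at one level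
      obtain ⟨z, hza, hzb, hzD⟩ : ∃ z, z ≠ a ∧ z ≠ b ∧ G.dist v z = G.dist v a := by
        by_cases h1 : c = a
        · refine ⟨d, ?_, ?_, ?_⟩
          · intro h; exact hcned (h1.trans h.symm)
          · intro h; exact hne1 ⟨h1, h⟩
          · omega
        · by_cases h2 : c = b
          · have h2' : G.dist v c = G.dist v b := by rw [h2]
            refine ⟨d, ?_, ?_, ?_⟩
            · intro h; exact hne2 ⟨h2, h⟩
            · intro h; exact hcned (h2.trans h.symm)
            · omega
          · exact ⟨c, h1, h2, hB1⟩
      have hzPa : z ∉ P a := fun h => hza (topEq z a h hzD)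
      have hzPb : z ∉ P b := fun h => hzb (topEq z b h (by omega))
      have haPb : a ∉ P b := fun h => haneb (topEq a b h hDab)
      have haPz : a ∉ P z := fun h => hza (topEq a z h hzD.symm).symm
      refine finish (P a ∪ P b) (P a ∪ P z) (P b ∪ P z) ⟨?_, ?_⟩ ⟨?_, ?_⟩ ⟨?_, ?_⟩
        ?_ ?_ ?_ ?_ ?_ ?_
      · exact Finset.mem_union_left _ (Pv a)
      · exact BicyclicAux.induce_union_conn G (Pconn a) (Pconn b) (Pv a) (Pv b)
      · exact Finset.mem_union_left _ (Pv a)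
      · exact BicyclicAux.induce_union_conn G (Pconn a) (Pconn z) (Pv a) (Pv z)
      · exact Finset.mem_union_left _ (Pv b)
      · exact BicyclicAux.induce_union_conn G (Pconn b) (Pconn z) (Pv b) (Pv z)
      · intro h
        have hz2 : z ∈ P a ∪ P z := Finset.mem_union_right _ (Pself z)
        rw [← h, Finset.mem_union] at hz2
        tauto
      · intro h
        have hz2 : z ∈ P b ∪ P z := Finset.mem_union_right _ (Pself z)
        rw [← h, Finset.mem_union] at hz2
        tauto
      · intro h
        have ha2 : a ∈ P a ∪ P z := Finset.mem_union_left _ (Pself a)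
        rw [h, Finset.mem_union] at ha2
        tauto
      · exact notImage _ a b (Finset.mem_union_left _ (Pself a))
          (Finset.mem_union_right _ (Pself b)) haneb hDab
      · exact notImage _ a z (Finset.mem_union_left _ (Pself a))
          (Finset.mem_union_right _ (Pself z)) (Ne.symm hza) (by omega)
      · exact notImage _ b z (Finset.mem_union_left _ (Pself b))
          (Finset.mem_union_right _ (Pself z)) (Ne.symm hzb) (by omega)
    · -- different levels
      have hwlog : ∀ p q x y : V, p ≠ q → G.dist v p = G.dist v q → x ≠ y →
          G.dist v x = G.dist v y → G.dist v p < G.dist v x →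
          Fintype.card V + 3 ≤ numConnSetsAt G v := by
        intro p q x y hpq hDpq hxy hDxy hlt
        have hxv : x ≠ v := by
          intro h; subst h
          rw [SimpleGraph.dist_self] at hlt
          omega
        obtain ⟨hgadj, hgd⟩ := BicyclicAux.gpar_spec G v hc hxv
        set g := BicyclicAux.gpar G v x with hg
        have hxPp : x ∉ P p := notMemHigh x p (by omega)
        have hxPq : x ∉ P q := notMemHigh x q (by omega)
        have hxPy : x ∉ P y := fun h => hxy (topEq x y h hDxy)
        have hxe₁ : x ∉ P p ∪ P q := by rw [Finset.mem_union]; tauto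
        have hye₁ : y ∉ P p ∪ P q := by
          rw [Finset.mem_union]
          push_neg
          exact ⟨notMemHigh y p (by omega), notMemHigh y q (by omega)⟩
        have hpx : p ≠ x := by intro h; rw [h] at hlt; omega
        have hqx : q ≠ x := by intro h; rw [h] at hDpq; omega
        have hOK₁ : v ∈ P p ∪ P q ∧ (G.induce (↑(P p ∪ P q) : Set V)).Connected :=
          ⟨Finset.mem_union_left _ (Pv p),
            BicyclicAux.induce_union_conn G (Pconn p) (Pconn q) (Pv p) (Pv q)⟩
        have hOK₂ : v ∈ P x ∪ P y ∧ (G.induce (↑(P x ∪ P y) : Set V)).Connected :=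
          ⟨Finset.mem_union_left _ (Pv x),
            BicyclicAux.induce_union_conn G (Pconn x) (Pconn y) (Pv x) (Pv y)⟩
        have hxe₂ : x ∈ P x ∪ P y := Finset.mem_union_left _ (Pself x)
        have h12 : P p ∪ P q ≠ P x ∪ P y := by
          intro h; rw [← h] at hxe₂; exact hxe₁ hxe₂
        have hi1 : P p ∪ P q ∉ Finset.univ.image P :=
          notImage _ p q (Finset.mem_union_left _ (Pself p))
            (Finset.mem_union_right _ (Pself q)) hpq hDpq
        have hi2 : P x ∪ P y ∉ Finset.univ.image P :=
          notImage _ x y (Finset.mem_union_left _ (Pself x))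
            (Finset.mem_union_right _ (Pself y)) hxy hDxy
        by_cases hV : (Finset.univ : Finset V) = P x ∪ P y
        · -- the whole vertex set coincides with the pair set : use univ.erase x
          have hxPg : x ∉ P g := notMemHigh x g (by omega)
          have h3eq : Finset.univ.erase x = P g ∪ P y := by
            rw [hV, Finset.erase_union_distrib, Pex x hxv, ← hg,
              Finset.erase_insert hxPg, Finset.erase_eq_of_notMem hxPy]
          refine finish (P p ∪ P q) (P x ∪ P y) (Finset.univ.erase x) hOK₁ hOK₂
            ⟨?_, ?_⟩ h12 ?_ ?_ hi1 hi2 ?_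
          · exact Finset.mem_erase.mpr ⟨Ne.symm hxv, Finset.mem_univ _⟩
          · rw [h3eq]
            exact BicyclicAux.induce_union_conn G (Pconn g) (Pconn y) (Pv g) (Pv y)
          · intro h
            have hy3 : y ∈ Finset.univ.erase x :=
              Finset.mem_erase.mpr ⟨Ne.symm hxy, Finset.mem_univ _⟩
            rw [← h] at hy3
            exact hye₁ hy3
          · intro h
            have : x ∈ Finset.univ.erase x := by rw [← h]; exact hxe₂
            exact Finset.notMem_erase _ _ this
          · exact notImage _ p q
              (Finset.mem_erase.mpr ⟨hpx, Finset.mem_univ _⟩)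
              (Finset.mem_erase.mpr ⟨hqx, Finset.mem_univ _⟩) hpq hDpq
        · -- use the whole vertex set as third member
          refine finish (P p ∪ P q) (P x ∪ P y) Finset.univ hOK₁ hOK₂
            ⟨Finset.mem_univ _, ?_⟩ h12 ?_ ?_ hi1 hi2 ?_
          · rw [Finset.coe_univ]
            exact (SimpleGraph.induceUnivIso G).connected_iff.mpr hc
          · intro h
            rw [h] at hxe₁
            exact hxe₁ (Finset.mem_univ _)
          · intro h; exact hV h.symm
          · exact notImage _ p q (Finset.mem_univ _) (Finset.mem_univ _) hpq hDpq
      have : G.dist v a < G.dist v c ∨ G.dist v c < G.dist v a := by omega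
      rcases this with h | h
      · exact hwlog a b c d haneb hDab hcned hDcd h
      · exact hwlog c d a b hcned hDcd haneb hDab h
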